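/- Let G be a finite simple graph. If there exists a linear ordering of the maximal cliques of G such that for every vertex v of G the set of maximal cliques containing v is consecutive in that ordering, then G is an interval graph. -/
import Mathlib


/-- A finite simple graph is an interval graph if each vertex can be assigned a
nonempty closed interval of the real line such that distinct vertices are adjacent
if and only if their intervals intersect. -/
def IsIntervalGraph {V : Type*} (G : SimpleGraph V) : Prop :=
  ∃ a b : V → ℝ, (∀ v, a v ≤ b v) ∧
    ∀ u v : V, u ≠ v →
      (G.Adj u v ↔ (Set.Icc (a u) (b u) ∩ Set.Icc (a v) (b v)).Nonempty)

/-- A maximal clique: a clique not properly contained in any other clique. -/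
def IsMaxClique {V : Type*} (G : SimpleGraph V) (C : Set V) : Prop :=
  G.IsClique C ∧ ∀ D : Set V, G.IsClique D → C ⊆ D → C = D

/-- There is a linear ordering of the maximal cliques of `G` such that for every
vertex `v`, the maximal cliques containing `v` appear consecutively. -/
def HasConsecutiveCliqueOrdering {V : Type*} (G : SimpleGraph V) : Prop :=
  ∃ r : {C : Set V // IsMaxClique G C} → {C : Set V // IsMaxClique G C} → Prop,
    IsLinearOrder {C : Set V // IsMaxClique G C} r ∧
    ∀ v : V, ∀ C₁ C₂ C₃ : {C : Set V // IsMaxClique G C},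
      r C₁ C₂ → r C₂ C₃ → v ∈ C₁.1 → v ∈ C₃.1 → v ∈ C₂.1

/-- Any clique extends to a maximal clique. -/
lemma exists_maxClique_superset {V : Type*} (G : SimpleGraph V) (s : Set V)
    (hs : G.IsClique s) : ∃ C, IsMaxClique G C ∧ s ⊆ C := by
  obtain ⟨m, hsm, hm⟩ := zorn_subset_nonempty {t : Set V | G.IsClique t}
    (fun c hc hchain hne => by
      refine ⟨⋃₀ c, ?_, fun t ht => Set.subset_sUnion_of_mem ht⟩
      intro x hx y hy hxy
      obtain ⟨a, hac, hxa⟩ := hx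
      obtain ⟨b, hbc, hyb⟩ := hy
      rcases hchain.total hac hbc with hab | hba
      · exact hc hbc (hab hxa) hyb hxy
      · exact hc hac hxa (hba hyb) hxy) s hs
  exact ⟨m, ⟨hm.1, fun D hD hmD => (hm.2 hD hmD).antisymm' hmD⟩, hsm⟩

/-- If the maximal cliques of a finite graph admit a linear ordering in which, for
every vertex, the cliques containing that vertex are consecutive, then the graph is
an interval graph. -/
theorem consecutiveCliqueOrdering_isIntervalGraph {V : Type*} [Fintype V]
    (G : SimpleGraph V) (h : HasConsecutiveCliqueOrdering G) :
    IsIntervalGraph G := by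
  classical
  obtain ⟨r, hlin, hcons⟩ := h
  haveI := hlin
  haveI : Fintype {C : Set V // IsMaxClique G C} := Fintype.ofFinite _
  -- rank function
  set f : {C : Set V // IsMaxClique G C} → ℝ :=
    fun C => ((Finset.univ.filter (fun D => r D C)).card : ℝ) with hf
  have hrefl : ∀ C : {C : Set V // IsMaxClique G C}, r C C := fun C => refl_of r C
  have freflect : ∀ C D : {C : Set V // IsMaxClique G C}, f C ≤ f D → r C D := by
    intro C D hle
    by_contra hCD
    have hDC : r D C := (total_of r C D).resolve_left hCD
    have hss : Finset.univ.filter (fun E => r E D) ⊂ Finset.univ.filter (fun E => r E C) := by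
      refine ⟨fun E hE => ?_, fun hsub => ?_⟩
      · simp only [Finset.mem_filter, Finset.mem_univ, true_and] at hE ⊢
        exact trans_of r hE hDC
      · have : C ∈ Finset.univ.filter (fun E => r E D) :=
          hsub (by simp [hrefl C])
        simp only [Finset.mem_filter] at this
        exact hCD this.2
    have hlt := Finset.card_lt_card hss
    have : f D < f C := by simp only [hf]; exact_mod_cast hlt
    linarith
  -- cliques containing a vertex
  have hmem : ∀ v : V, ∃ C : {C : Set V // IsMaxClique G C}, v ∈ C.1 := by
    intro v
    obtain ⟨C, hC, hsC⟩ := exists_maxClique_superset G {v} (G.isClique_singleton v)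
    exact ⟨⟨C, hC⟩, hsC rfl⟩
  set sv : V → Finset {C : Set V // IsMaxClique G C} := fun v => Finset.univ.filter (fun C => v ∈ C.1) with hsv
  have hsvne : ∀ v, ((sv v).image f).Nonempty := by
    intro v
    obtain ⟨C, hC⟩ := hmem v
    exact ⟨f C, Finset.mem_image_of_mem f (by simp [hsv, hC])⟩
  set a : V → ℝ := fun v => ((sv v).image f).min' (hsvne v) with ha
  set b : V → ℝ := fun v => ((sv v).image f).max' (hsvne v) with hb
  have hmemf : ∀ (v : V) (C : {C : Set V // IsMaxClique G C}), v ∈ C.1 → f C ∈ (sv v).image f := by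
    intro v C hC
    exact Finset.mem_image_of_mem f (by simp [hsv, hC])
  have hale : ∀ (v : V) (C : {C : Set V // IsMaxClique G C}), v ∈ C.1 → a v ≤ f C :=
    fun v C hC => Finset.min'_le _ _ (hmemf v C hC)
  have hleb : ∀ (v : V) (C : {C : Set V // IsMaxClique G C}), v ∈ C.1 → f C ≤ b v :=
    fun v C hC => Finset.le_max' _ _ (hmemf v C hC)
  -- key: if a u ≤ a v ≤ b u then u and v share a maximal clique
  have key : ∀ u v : V, a u ≤ a v → a v ≤ b u → ∃ C : {C : Set V // IsMaxClique G C}, u ∈ C.1 ∧ v ∈ C.1 := by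
    intro u v hau hvb
    obtain ⟨xv, hxv, hfv⟩ := Finset.mem_image.mp (((sv v).image f).min'_mem (hsvne v))
    obtain ⟨x1, hx1, hf1⟩ := Finset.mem_image.mp (((sv u).image f).min'_mem (hsvne u))
    obtain ⟨x2, hx2, hf2⟩ := Finset.mem_image.mp (((sv u).image f).max'_mem (hsvne u))
    simp only [hsv, Finset.mem_filter, Finset.mem_univ, true_and] at hxv hx1 hx2
    have h1 : r x1 xv := freflect _ _ (by rw [hf1, hfv]; exact hau)
    have h2 : r xv x2 := freflect _ _ (by rw [hfv, hf2]; exact hvb)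
    exact ⟨xv, hcons u x1 xv x2 h1 h2 hx1 hx2, hxv⟩
  refine ⟨a, b, fun v => Finset.min'_le _ _ (((sv v).image f).max'_mem (hsvne v)), fun u v huv => ?_⟩
  constructor
  · intro hadj
    obtain ⟨C, hC, hsC⟩ := exists_maxClique_superset G {u, v}
      (SimpleGraph.isClique_pair.mpr fun _ => hadj)
    have hu : u ∈ C := hsC (by simp)
    have hv : v ∈ C := hsC (by simp)
    exact ⟨f ⟨C, hC⟩, ⟨hale u _ hu, hleb u _ hu⟩, ⟨hale v _ hv, hleb v _ hv⟩⟩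
  · rintro ⟨x, ⟨hau, hub⟩, hav, hvb⟩
    rcases le_total (a u) (a v) with hle | hle
    · obtain ⟨C, hCu, hCv⟩ := key u v hle (le_trans hav hub)
      exact C.2.1 hCu hCv huv
    · obtain ⟨C, hCv, hCu⟩ := key v u hle (le_trans hau hvb)
      exact C.2.1 hCu hCv huv
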